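/- Let f: ℝ^d → ℝ be C² with Hessian satisfying 0 ⪯ ∇²f(w)(∇²f(w))ᵀ ⪯ H for a fixed PSD matrix H with PSD square root H^{1/2}. Fix m > 0, t > 0, define w̄(t, w₀) = e^{-mt} w₀ - ((1 - e^{-mt})/m) ∇f(w₀). Then ‖∇f(w̄(t, w₀)) - ∇f(w₀)‖² ≤ ((1 - e^{-mt})/m)² · (m w₀ + ∇f(w₀))ᵀ H (m w₀ + ∇f(w₀)). -/

import Mathlib

open scoped Matrix

lemma aux_inner_nonneg {d : ℕ} {P : Matrix (Fin d) (Fin d) ℝ} (hP : P.PosSemidef)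
    (x : EuclideanSpace ℝ (Fin d)) :
    0 ≤ inner (𝕜 := ℝ) x (Matrix.toEuclideanCLM (𝕜 := ℝ) P x) := by
  rw [EuclideanSpace.inner_eq_star_dotProduct]
  simpa [Matrix.toLin'_apply, dotProduct_comm (P *ᵥ _)] using hP.dotProduct_mulVec_nonneg (WithLp.equiv _ _ x)

lemma aux_self {d : ℕ} (f : EuclideanSpace ℝ (Fin d) → ℝ)
    (g : EuclideanSpace ℝ (Fin d) → EuclideanSpace ℝ (Fin d))
    (M : EuclideanSpace ℝ (Fin d) → Matrix (Fin d) (Fin d) ℝ)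
    (hg : ∀ w, HasGradientAt f (g w) w)
    (hM : ∀ w, HasFDerivAt g (Matrix.toEuclideanCLM (𝕜 := ℝ) (M w)) w)
    (w : EuclideanSpace ℝ (Fin d)) :
    IsSelfAdjoint (Matrix.toEuclideanCLM (𝕜 := ℝ) (M w)) := by
  set A := Matrix.toEuclideanCLM (𝕜 := ℝ) (M w) with hA
  set L : EuclideanSpace ℝ (Fin d) →L[ℝ] EuclideanSpace ℝ (Fin d) →L[ℝ] ℝ :=
    (innerSL ℝ : EuclideanSpace ℝ (Fin d) →L[ℝ] EuclideanSpace ℝ (Fin d) →L[ℝ] ℝ) with hL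
  have hf' : ∀ y, HasFDerivAt f (L (g y)) y := by
    intro y
    have h1 := hasGradientAt_iff_hasFDerivAt.mp (hg y)
    have heq : L (g y) = InnerProductSpace.toDual ℝ _ (g y) := by
      rfl
    rw [heq]
    exact h1
  have hB : HasFDerivAt (fun y => L (g y)) (L.comp A) w :=
    L.hasFDerivAt.comp w (hM w)
  have hsymm := second_derivative_symmetric hf' hB
  rw [ContinuousLinearMap.isSelfAdjoint_iff_isSymmetric]
  intro v u
  have := hsymm v u
  simp only [ContinuousLinearMap.comp_apply, hL, innerSL_apply_apply] at this
  calc inner (𝕜 := ℝ) (A v) u = inner (𝕜 := ℝ) (A u) v := this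
    _ = inner (𝕜 := ℝ) v (A u) := real_inner_comm _ _

lemma aux_bound {d : ℕ}
    (M : Matrix (Fin d) (Fin d) ℝ)
    (H : Matrix (Fin d) (Fin d) ℝ)
    (hMH : (H - M * Mᵀ).PosSemidef)
    (hself : IsSelfAdjoint (Matrix.toEuclideanCLM (𝕜 := ℝ) M))
    (u : EuclideanSpace ℝ (Fin d)) :
    ‖Matrix.toEuclideanCLM (𝕜 := ℝ) M u‖ ^ 2 ≤
      inner (𝕜 := ℝ) u (Matrix.toEuclideanCLM (𝕜 := ℝ) H u) := by
  set A := Matrix.toEuclideanCLM (𝕜 := ℝ) M with hA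
  have h1 : Matrix.toEuclideanCLM (𝕜 := ℝ) (M * Mᵀ) = A.comp A := by
    rw [map_mul]
    congr 1
    have : (Mᵀ : Matrix (Fin d) (Fin d) ℝ) = star M := by
      simp [Matrix.star_eq_conjTranspose]
    rw [this, map_star]
    exact hself
  have h2 : ‖A u‖ ^ 2 = inner (𝕜 := ℝ) u (Matrix.toEuclideanCLM (𝕜 := ℝ) (M * Mᵀ) u) := by
    rw [h1]
    rw [← real_inner_self_eq_norm_sq]
    simp only [ContinuousLinearMap.comp_apply]
    rw [← ContinuousLinearMap.adjoint_inner_left, hself.adjoint_eq, real_inner_comm]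
  have h3 := aux_inner_nonneg hMH u
  rw [map_sub, ContinuousLinearMap.sub_apply, inner_sub_right] at h3
  linarith [h2]


/-- For `f` C² with `0 ⪯ (∇²f)(∇²f)ᵀ ⪯ H` (PSD `H`), `m, t > 0`, and
`w̄(t,w₀) = e^{-mt} w₀ - ((1-e^{-mt})/m) ∇f(w₀)`, one has
`‖∇f(w̄(t,w₀)) - ∇f(w₀)‖² ≤ ((1-e^{-mt})/m)² (m w₀ + ∇f(w₀))ᵀ H (m w₀ + ∇f(w₀))`. -/
theorem stmt8 {d : ℕ} (f : EuclideanSpace ℝ (Fin d) → ℝ)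
    (g : EuclideanSpace ℝ (Fin d) → EuclideanSpace ℝ (Fin d))
    (M : EuclideanSpace ℝ (Fin d) → Matrix (Fin d) (Fin d) ℝ)
    (H : Matrix (Fin d) (Fin d) ℝ)
    (hH : H.PosSemidef)
    (hf : ContDiff ℝ 2 f)
    (hg : ∀ w, HasGradientAt f (g w) w)
    (hM : ∀ w, HasFDerivAt g (Matrix.toEuclideanCLM (𝕜 := ℝ) (M w)) w)
    (hMpsd : ∀ w, (M w * (M w)ᵀ).PosSemidef)
    (hMH : ∀ w, (H - M w * (M w)ᵀ).PosSemidef)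
    (m t : ℝ) (hm : 0 < m) (ht : 0 < t) :
    ∀ w₀ : EuclideanSpace ℝ (Fin d),
      ‖g (Real.exp (-(m * t)) • w₀ - ((1 - Real.exp (-(m * t))) / m) • g w₀) - g w₀‖ ^ 2 ≤
        ((1 - Real.exp (-(m * t))) / m) ^ 2 *
          inner (𝕜 := ℝ) (m • w₀ + g w₀)
            (Matrix.toEuclideanCLM (𝕜 := ℝ) H (m • w₀ + g w₀)) := by
  intro w₀
  set c : ℝ := (1 - Real.exp (-(m * t))) / m with hc
  set v : EuclideanSpace ℝ (Fin d) := m • w₀ + g w₀ with hv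
  set u : EuclideanSpace ℝ (Fin d) := -(c • v) with hu
  have hcm : c * m = 1 - Real.exp (-(m * t)) := by
    rw [hc]
    field_simp
  have hwbar : Real.exp (-(m * t)) • w₀ - c • g w₀ = w₀ + u := by
    rw [hu, hv]
    match_scalars <;> simp <;> linarith [hcm]
  -- pointwise bound on derivative along the path
  have hHu : (0:ℝ) ≤ inner (𝕜 := ℝ) u (Matrix.toEuclideanCLM (𝕜 := ℝ) H u) :=
    aux_inner_nonneg (by simpa using hH) u
  set C : ℝ := Real.sqrt (inner (𝕜 := ℝ) u (Matrix.toEuclideanCLM (𝕜 := ℝ) H u)) with hC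
  have key2 : ∀ w, ‖Matrix.toEuclideanCLM (𝕜 := ℝ) (M w) u‖ ≤ C := by
    intro w
    have h := aux_bound (M w) H (hMH w) (aux_self f g M hg hM w) u
    have h2 := Real.sq_sqrt hHu
    nlinarith [norm_nonneg (Matrix.toEuclideanCLM (𝕜 := ℝ) (M w) u), Real.sqrt_nonneg (inner (𝕜 := ℝ) u (Matrix.toEuclideanCLM (𝕜 := ℝ) H u))]
  have hpath : ∀ s : ℝ, HasDerivAt (fun s : ℝ => g (w₀ + s • u))
      (Matrix.toEuclideanCLM (𝕜 := ℝ) (M (w₀ + s • u)) u) s := by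
    intro s
    have h1 : HasDerivAt (fun s : ℝ => w₀ + s • u) u s := by
      simpa using ((hasDerivAt_id s).smul_const u).const_add w₀
    exact (hM _).comp_hasDerivAt s h1
  have hmv : ‖g (w₀ + u) - g w₀‖ ≤ C := by
    have := convex_univ.norm_image_sub_le_of_norm_hasDerivWithin_le
      (f := fun s : ℝ => g (w₀ + s • u))
      (f' := fun s : ℝ => Matrix.toEuclideanCLM (𝕜 := ℝ) (M (w₀ + s • u)) u)
      (fun x _ => (hpath x).hasDerivWithinAt) (fun x _ => key2 _)
      (Set.mem_univ (0:ℝ)) (Set.mem_univ (1:ℝ))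
    simpa using this
  have hsq : ‖g (w₀ + u) - g w₀‖ ^ 2 ≤ C ^ 2 :=
    pow_le_pow_left₀ (norm_nonneg _) hmv 2
  rw [hC, Real.sq_sqrt hHu] at hsq
  have hfinal : inner (𝕜 := ℝ) u (Matrix.toEuclideanCLM (𝕜 := ℝ) H u)
      = c ^ 2 * inner (𝕜 := ℝ) v (Matrix.toEuclideanCLM (𝕜 := ℝ) H v) := by
    rw [hu]
    simp only [map_neg, map_smul, inner_neg_neg, real_inner_smul_left, real_inner_smul_right]
    ring
  rw [hwbar]
  rw [hfinal] at hsq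
  exact hsq
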